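/- Let ϰ̃ ∈ ℝ and ṽ > 0, and define D(ṽ) = ṽ(ϰ̃²(ṽ−1)ṽ + 3) − 1 and p̃^±(ṽ) = (ṽ + 1 ± (1 − ṽ)·√(ϰ̃⁴ṽ² + ϰ̃²(ṽ−1)² + 4)) / D(ṽ). Suppose D(ṽ) ≠ 0 and p̃ := p̃^+(ṽ) ≠ 1 (respectively p̃ := p̃^−(ṽ) ≠ 1). Then p̃ satisfies the dimensionless Hugoniot relation with center (1,1) for γ = 2: (ṽ·p̃ − 1) + (1/2)(p̃ + 1)(ṽ − 1) + (ϰ̃²/2)·((ṽ·p̃)² − 1)(ṽ − 1)/(p̃ − 1) = 0. -/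

import Mathlib

/-- The two explicit branches `p̃^±(ṽ)` satisfy the dimensionless Hugoniot relation with
center `(1,1)` for a polytropic gas with `γ = 2` in the hyperbolic heat-conduction model,
whenever the denominator `D(ṽ)` is nonzero and `p̃^± ≠ 1`. -/
theorem stmt_14 (ϰ v : ℝ) (hv : 0 < v)
    (hD : v * (ϰ ^ 2 * (v - 1) * v + 3) - 1 ≠ 0) :
    (∀ p : ℝ,
      p = (v + 1 + (1 - v) * Real.sqrt (ϰ ^ 4 * v ^ 2 + ϰ ^ 2 * (v - 1) ^ 2 + 4)) /
          (v * (ϰ ^ 2 * (v - 1) * v + 3) - 1) →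
      p ≠ 1 →
      (v * p - 1) + (1 / 2) * (p + 1) * (v - 1)
        + (ϰ ^ 2 / 2) * ((v * p) ^ 2 - 1) * (v - 1) / (p - 1) = 0) ∧
    (∀ p : ℝ,
      p = (v + 1 - (1 - v) * Real.sqrt (ϰ ^ 4 * v ^ 2 + ϰ ^ 2 * (v - 1) ^ 2 + 4)) /
          (v * (ϰ ^ 2 * (v - 1) * v + 3) - 1) →
      p ≠ 1 →
      (v * p - 1) + (1 / 2) * (p + 1) * (v - 1)
        + (ϰ ^ 2 / 2) * ((v * p) ^ 2 - 1) * (v - 1) / (p - 1) = 0) := by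
  have hs : (Real.sqrt (ϰ ^ 4 * v ^ 2 + ϰ ^ 2 * (v - 1) ^ 2 + 4)) ^ 2
      = ϰ ^ 4 * v ^ 2 + ϰ ^ 2 * (v - 1) ^ 2 + 4 := Real.sq_sqrt (by positivity)
  set s := Real.sqrt (ϰ ^ 4 * v ^ 2 + ϰ ^ 2 * (v - 1) ^ 2 + 4) with hsdef
  constructor
  · intro p hp hp1
    have hpD : p * (v * (ϰ ^ 2 * (v - 1) * v + 3) - 1) = v + 1 + (1 - v) * s := by
      rw [hp]; exact div_mul_cancel₀ _ hD
    have hQ : (v * (ϰ ^ 2 * (v - 1) * v + 3) - 1) * p ^ 2 - 2 * (v + 1) * p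
        + (3 - v - ϰ ^ 2 * (v - 1)) = 0 := by
      apply mul_left_cancel₀ hD; rw [mul_zero]
      linear_combination (p * (v * (ϰ ^ 2 * (v - 1) * v + 3) - 1) - (v + 1) + (1 - v) * s) * hpD
        + (1 - v) ^ 2 * hs
    have hp1' : p - 1 ≠ 0 := sub_ne_zero.mpr hp1
    field_simp
    linear_combination hQ
  · intro p hp hp1
    have hpD : p * (v * (ϰ ^ 2 * (v - 1) * v + 3) - 1) = v + 1 - (1 - v) * s := by
      rw [hp]; exact div_mul_cancel₀ _ hD
    have hQ : (v * (ϰ ^ 2 * (v - 1) * v + 3) - 1) * p ^ 2 - 2 * (v + 1) * p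
        + (3 - v - ϰ ^ 2 * (v - 1)) = 0 := by
      apply mul_left_cancel₀ hD; rw [mul_zero]
      linear_combination (p * (v * (ϰ ^ 2 * (v - 1) * v + 3) - 1) - (v + 1) - (1 - v) * s) * hpD
        + (1 - v) ^ 2 * hs
    have hp1' : p - 1 ≠ 0 := sub_ne_zero.mpr hp1
    field_simp
    linear_combination hQ
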